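/- Let d ≥ 2, N ≥ 3, j ∈ {2,…,N}, and set d̃ = d^{N−1} − d + 1. Then the map sending the tuple (i_1, (i_k)_{k∈{2,…,N}∖{j}}) ∈ {0,…,d−1}^{N−1} to i_1·d̃ + ∑_{k∈{2,…,N}∖{j}} i_k·d^{N−k} is injective. -/

import Mathlib

lemma geo_aux (d : ℕ) (hd : 1 ≤ d) (n : ℕ) :
    ∑ e ∈ Finset.range n, (d - 1) * d ^ e = d ^ n - 1 := by
  induction n with
  | zero => simp
  | succ n ih =>
      rw [Finset.sum_range_succ, ih]
      have h1 : 1 ≤ d ^ n := Nat.one_le_pow _ _ (by omega)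
      have h2 : (d - 1) * d ^ n = d ^ (n + 1) - d ^ n := by
        rw [pow_succ, mul_comm (d ^ n) d, Nat.sub_mul, one_mul, mul_comm]
      have h3 : d ^ n ≤ d ^ (n + 1) := Nat.pow_le_pow_right (by omega) (by omega)
      omega

lemma digitsUnique (d : ℕ) (hd : 2 ≤ d) :
    ∀ (E : Finset ℕ) (f c c' : ℕ → ℕ), Set.InjOn f E →
    (∀ k ∈ E, c k < d) → (∀ k ∈ E, c' k < d) →
    (∑ k ∈ E, c k * d ^ f k = ∑ k ∈ E, c' k * d ^ f k) →
    ∀ k ∈ E, c k = c' k := by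
  intro E
  induction E using Finset.strongInduction with
  | _ E ih =>
    intro f c c' hinj hc hc' hsum k hk
    have hne : E.Nonempty := ⟨k, hk⟩
    have hne' : (E.image f).Nonempty := hne.image f
    set m := (E.image f).min' hne' with hm
    obtain ⟨k0, hk0E, hk0⟩ : ∃ k0 ∈ E, f k0 = m := by
      have := (E.image f).min'_mem hne'
      rw [Finset.mem_image] at this
      exact this
    have hgt : ∀ a ∈ E.erase k0, m < f a := by
      intro a ha
      have haE := Finset.mem_of_mem_erase ha
      have hle : m ≤ f a := Finset.min'_le _ _ (Finset.mem_image_of_mem f haE)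
      rcases Nat.lt_or_ge m (f a) with h | h
      · exact h
      · exfalso
        have : f a = f k0 := by omega
        have : a = k0 := hinj haE hk0E (by rw [this, hk0])
        exact (Finset.ne_of_mem_erase ha) this
    have key : ∀ (cc : ℕ → ℕ), (∀ x ∈ E, cc x < d) →
        (∑ x ∈ E, cc x * d ^ f x) % d ^ (m + 1) = cc k0 * d ^ m ∧
        ∑ x ∈ E, cc x * d ^ f x
          = cc k0 * d ^ m + ∑ x ∈ E.erase k0, cc x * d ^ f x := by
      intro cc hcc
      have hsplit : ∑ x ∈ E, cc x * d ^ f x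
          = cc k0 * d ^ m + ∑ x ∈ E.erase k0, cc x * d ^ f x := by
        rw [← hk0, ← Finset.add_sum_erase _ _ hk0E]
      have hdvd : d ^ (m + 1) ∣ ∑ x ∈ E.erase k0, cc x * d ^ f x := by
        apply Finset.dvd_sum
        intro a ha
        exact Dvd.dvd.mul_left (pow_dvd_pow d (hgt a ha)) _
      have hlt : cc k0 * d ^ m < d ^ (m + 1) := by
        rw [pow_succ, mul_comm (d ^ m) d]
        exact Nat.mul_lt_mul_of_lt_of_le (hcc k0 hk0E) le_rfl (Nat.pow_pos (by omega))
      constructor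
      · have h0 : (∑ x ∈ E.erase k0, cc x * d ^ f x) % d ^ (m + 1) = 0 :=
          Nat.mod_eq_zero_of_dvd hdvd
        rw [hsplit, Nat.add_mod, h0, Nat.add_zero, Nat.mod_mod_of_dvd _ dvd_rfl,
          Nat.mod_eq_of_lt hlt]
      · exact hsplit
    obtain ⟨hmod, hsplit⟩ := key c hc
    obtain ⟨hmod', hsplit'⟩ := key c' hc'
    have hck0 : c k0 = c' k0 := by
      have : c k0 * d ^ m = c' k0 * d ^ m := by
        rw [← hmod, ← hmod', hsum]
      exact Nat.eq_of_mul_eq_mul_right (Nat.pow_pos (by omega)) this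
    have hrest : ∑ x ∈ E.erase k0, c x * d ^ f x = ∑ x ∈ E.erase k0, c' x * d ^ f x := by
      rw [hsplit, hsplit', hck0] at hsum
      omega
    have hihres := ih (E.erase k0) (Finset.erase_ssubset hk0E) f c c'
      (hinj.mono (by intro x hx; exact Finset.mem_of_mem_erase hx))
      (fun x hx => hc x (Finset.mem_of_mem_erase hx))
      (fun x hx => hc' x (Finset.mem_of_mem_erase hx)) hrest
    rcases eq_or_ne k k0 with h | h
    · rw [h]; exact hck0
    · exact hihres k (Finset.mem_erase.mpr ⟨h, hk⟩)

/-- For `j ∈ {2,…,N}` and `d̃ = d^{N-1} - d + 1`, the map sending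
`(i₁, (i_k)_{k ∈ {2,…,N}∖{j}}) ∈ {0,…,d-1}^{N-1}` to `i₁·d̃ + ∑_{k≠j} i_k·d^{N-k}`
is injective. -/
theorem stmt13 (d N j : ℕ) (hd : 2 ≤ d) (hN : 3 ≤ N) (hj : j ∈ Finset.Icc 2 N)
    (i1 i1' : ℕ) (h1 : i1 < d) (h1' : i1' < d)
    (i i' : ℕ → ℕ)
    (hi : ∀ k ∈ (Finset.Icc 2 N).erase j, i k < d)
    (hi' : ∀ k ∈ (Finset.Icc 2 N).erase j, i' k < d)
    (heq : i1 * (d ^ (N - 1) - d + 1) +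
            ∑ k ∈ (Finset.Icc 2 N).erase j, i k * d ^ (N - k)
        = i1' * (d ^ (N - 1) - d + 1) +
            ∑ k ∈ (Finset.Icc 2 N).erase j, i' k * d ^ (N - k)) :
    i1 = i1' ∧ ∀ k ∈ (Finset.Icc 2 N).erase j, i k = i' k := by
  simp only [Finset.mem_Icc] at hj
  set t := d ^ (N - 1) - d + 1 with ht
  have hdN : d ≤ d ^ (N - 1) := by
    calc d = d ^ 1 := (pow_one d).symm
    _ ≤ d ^ (N - 1) := Nat.pow_le_pow_right (by omega) (by omega)
  -- the full geometric sum over Icc 2 N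
  have hfull : ∑ k ∈ Finset.Icc 2 N, (d - 1) * d ^ (N - k) = d ^ (N - 1) - 1 := by
    rw [← geo_aux d (by omega) (N - 1)]
    apply Finset.sum_bij' (fun k _ => N - k) (fun e _ => N - e)
    · intro k hk; simp only [Finset.mem_Icc] at hk; simp only [Finset.mem_range]; omega
    · intro e he; simp only [Finset.mem_range] at he; simp only [Finset.mem_Icc]; omega
    · intro k hk; simp only [Finset.mem_Icc] at hk; omega
    · intro e he; simp only [Finset.mem_range] at he; omega
    · intro k hk; rfl
  -- bound on the sums over the erased set
  have hbound : ∀ (c : ℕ → ℕ), (∀ k ∈ (Finset.Icc 2 N).erase j, c k < d) →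
      ∑ k ∈ (Finset.Icc 2 N).erase j, c k * d ^ (N - k) < t := by
    intro c hc
    have hjmem : j ∈ Finset.Icc 2 N := Finset.mem_Icc.mpr hj
    have h2 : ∑ k ∈ (Finset.Icc 2 N).erase j, c k * d ^ (N - k)
        ≤ ∑ k ∈ (Finset.Icc 2 N).erase j, (d - 1) * d ^ (N - k) := by
      apply Finset.sum_le_sum
      intro k hk
      exact Nat.mul_le_mul_right _ (by have := hc k hk; omega)
    have h3 : (d - 1) * d ^ (N - j) + ∑ k ∈ (Finset.Icc 2 N).erase j, (d - 1) * d ^ (N - k)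
        = d ^ (N - 1) - 1 := by
      rw [← hfull]
      exact Finset.add_sum_erase (Finset.Icc 2 N) (fun k => (d - 1) * d ^ (N - k)) hjmem
    have h4 : 1 ≤ d ^ (N - j) := Nat.one_le_pow _ _ (by omega)
    have h5 : d - 1 ≤ (d - 1) * d ^ (N - j) := Nat.le_mul_of_pos_right _ (by omega)
    omega
  have hS := hbound i hi
  have hS' := hbound i' hi'
  have ht0 : 0 < t := by omega
  have hdiv : ∀ (a S : ℕ), S < t → (a * t + S) / t = a := by
    intro a S hSt
    rw [mul_comm, Nat.mul_add_div ht0, Nat.div_eq_of_lt hSt, Nat.add_zero]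
  have hi1 : i1 = i1' := by
    have := hdiv i1 _ hS
    rw [heq, hdiv i1' _ hS'] at this
    exact this.symm
  refine ⟨hi1, ?_⟩
  rw [hi1] at heq
  have hsum : ∑ k ∈ (Finset.Icc 2 N).erase j, i k * d ^ (N - k)
      = ∑ k ∈ (Finset.Icc 2 N).erase j, i' k * d ^ (N - k) := by omega
  apply digitsUnique d hd _ (fun k => N - k) i i' _ hi hi' hsum
  intro a ha b hb hab
  simp only [Finset.coe_erase, Set.mem_diff, Finset.coe_Icc, Set.mem_Icc] at ha hb
  have hab' : N - a = N - b := hab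
  omega
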